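/- Let Ω ⊆ ℝ⁵ be open, let G, H : Ω → ℝ be smooth, and let z : U → ℝ be a smooth solution of the PDE system z_y = G(x,y,z,z_x,z_xx), z_xxx = H(x,y,z,z_x,z_xx) on an open set U ⊆ ℝ² whose 2-jet map j takes values in Ω. Then the integrability expression vanishes along the solution: (Δ H)(j(x,y)) = (D³ G)(j(x,y)) for all (x,y) ∈ U. -/

import Mathlib

/-- Partial derivative of a function on `ℝ⁵` (coordinates `(x,y,z,p,r)` indexed `0,…,4`)
in the `i`-th coordinate direction. -/
noncomputable def pd (i : Fin 5) (F : (Fin 5 → ℝ) → ℝ) (v : Fin 5 → ℝ) : ℝ :=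
  fderiv ℝ F v (Pi.single i 1)

/-- The total derivative operator `D F = F_x + p F_z + r F_p + H F_r`. -/
noncomputable def Dop (H : (Fin 5 → ℝ) → ℝ) (F : (Fin 5 → ℝ) → ℝ) (v : Fin 5 → ℝ) : ℝ :=
  pd 0 F v + v 3 * pd 2 F v + v 4 * pd 3 F v + H v * pd 4 F v

/-- The operator `Δ F = F_y + G F_z + (DG) F_p + (D²G) F_r`. -/
noncomputable def Delta (G H : (Fin 5 → ℝ) → ℝ) (F : (Fin 5 → ℝ) → ℝ) (v : Fin 5 → ℝ) : ℝ :=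
  pd 1 F v + G v * pd 2 F v + Dop H G v * pd 3 F v + Dop H (Dop H G) v * pd 4 F v

/-- `z_x`. -/
noncomputable def zx (z : ℝ → ℝ → ℝ) (x y : ℝ) : ℝ := deriv (fun t => z t y) x
/-- `z_xx`. -/
noncomputable def zxx (z : ℝ → ℝ → ℝ) (x y : ℝ) : ℝ := deriv (fun t => zx z t y) x
/-- `z_xxx`. -/
noncomputable def zxxx (z : ℝ → ℝ → ℝ) (x y : ℝ) : ℝ := deriv (fun t => zxx z t y) x
/-- `z_y`. -/
noncomputable def zy (z : ℝ → ℝ → ℝ) (x y : ℝ) : ℝ := deriv (fun s => z x s) y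

/-- The 2-jet map `j(x,y) = (x, y, z(x,y), z_x(x,y), z_xx(x,y))`. -/
noncomputable def jet (z : ℝ → ℝ → ℝ) (q : ℝ × ℝ) : Fin 5 → ℝ :=
  ![q.1, q.2, z q.1 q.2, zx z q.1 q.2, zxx z q.1 q.2]

/-- `z` is a smooth solution of the PDE system `z_y = G∘j`, `z_xxx = H∘j` on `U`,
with 2-jet map taking values in `Ω`. -/
def IsSolution (Ω : Set (Fin 5 → ℝ)) (G H : (Fin 5 → ℝ) → ℝ)
    (U : Set (ℝ × ℝ)) (z : ℝ → ℝ → ℝ) : Prop :=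
  ContDiffOn ℝ (⊤ : ℕ∞) (fun q : ℝ × ℝ => z q.1 q.2) U ∧
  (∀ q ∈ U, jet z q ∈ Ω) ∧
  (∀ q ∈ U, zy z q.1 q.2 = G (jet z q)) ∧
  (∀ q ∈ U, zxxx z q.1 q.2 = H (jet z q))



open Filter Topology

noncomputable def px (f : ℝ × ℝ → ℝ) (q : ℝ × ℝ) : ℝ := deriv (fun t => f (t, q.2)) q.1
noncomputable def py (f : ℝ × ℝ → ℝ) (q : ℝ × ℝ) : ℝ := deriv (fun s => f (q.1, s)) q.2

lemma hasDerivAt_fst' {E : Type*} [NormedAddCommGroup E] [NormedSpace ℝ E]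
    (f : ℝ × ℝ → E) {q : ℝ × ℝ} (hf : DifferentiableAt ℝ f q) :
    HasDerivAt (fun t => f (t, q.2)) (fderiv ℝ f q (1, 0)) q.1 := by
  have h : HasDerivAt (fun t : ℝ => (t, q.2)) ((1 : ℝ), (0 : ℝ)) q.1 :=
    (hasDerivAt_id q.1).prodMk (hasDerivAt_const q.1 q.2)
  simpa [Function.comp_def] using hf.hasFDerivAt.comp_hasDerivAt q.1 h

lemma hasDerivAt_snd' {E : Type*} [NormedAddCommGroup E] [NormedSpace ℝ E]
    (f : ℝ × ℝ → E) {q : ℝ × ℝ} (hf : DifferentiableAt ℝ f q) :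
    HasDerivAt (fun s => f (q.1, s)) (fderiv ℝ f q (0, 1)) q.2 := by
  have h : HasDerivAt (fun s : ℝ => (q.1, s)) ((0 : ℝ), (1 : ℝ)) q.2 :=
    (hasDerivAt_const q.2 q.1).prodMk (hasDerivAt_id q.2)
  simpa [Function.comp_def] using hf.hasFDerivAt.comp_hasDerivAt q.2 h

lemma diffAt_of_contDiffOn {E F : Type*} [NormedAddCommGroup E] [NormedSpace ℝ E]
    [NormedAddCommGroup F] [NormedSpace ℝ F] {f : E → F} {U : Set E} {q : E}
    (hU : IsOpen U) (hf : ContDiffOn ℝ (⊤ : ℕ∞) f U) (hq : q ∈ U) :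
    DifferentiableAt ℝ f q :=
  (hf.contDiffAt (hU.mem_nhds hq)).differentiableAt (by simp)

lemma hasDerivAt_px {f : ℝ × ℝ → ℝ} {q : ℝ × ℝ} (hf : DifferentiableAt ℝ f q) :
    HasDerivAt (fun t => f (t, q.2)) (px f q) q.1 := by
  have h := hasDerivAt_fst' f hf
  rwa [show px f q = fderiv ℝ f q (1, 0) from h.deriv]

lemma hasDerivAt_py {f : ℝ × ℝ → ℝ} {q : ℝ × ℝ} (hf : DifferentiableAt ℝ f q) :
    HasDerivAt (fun s => f (q.1, s)) (py f q) q.2 := by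
  have h := hasDerivAt_snd' f hf
  rwa [show py f q = fderiv ℝ f q (0, 1) from h.deriv]

lemma contDiffOn_px {f : ℝ × ℝ → ℝ} {U : Set (ℝ × ℝ)} (hU : IsOpen U)
    (hf : ContDiffOn ℝ (⊤ : ℕ∞) f U) : ContDiffOn ℝ (⊤ : ℕ∞) (px f) U := by
  have h : ContDiffOn ℝ (⊤ : ℕ∞) (fderiv ℝ f) U := by
    have := hf.fderiv_of_isOpen (m := (⊤ : ℕ∞)) hU (by exact_mod_cast le_top)
    exact this
  exact (h.clm_apply contDiffOn_const).congr fun q hq =>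
    (hasDerivAt_fst' f (diffAt_of_contDiffOn hU hf hq)).deriv

lemma contDiffOn_py {f : ℝ × ℝ → ℝ} {U : Set (ℝ × ℝ)} (hU : IsOpen U)
    (hf : ContDiffOn ℝ (⊤ : ℕ∞) f U) : ContDiffOn ℝ (⊤ : ℕ∞) (py f) U := by
  have h : ContDiffOn ℝ (⊤ : ℕ∞) (fderiv ℝ f) U := by
    have := hf.fderiv_of_isOpen (m := (⊤ : ℕ∞)) hU (by exact_mod_cast le_top)
    exact this
  exact (h.clm_apply contDiffOn_const).congr fun q hq =>
    (hasDerivAt_snd' f (diffAt_of_contDiffOn hU hf hq)).deriv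

lemma evmem_x {U : Set (ℝ × ℝ)} {q : ℝ × ℝ} (hU : IsOpen U) (hq : q ∈ U) :
    ∀ᶠ t in 𝓝 q.1, (t, q.2) ∈ U := by
  have : ContinuousAt (fun t : ℝ => (t, q.2)) q.1 :=
    (continuous_id.prodMk continuous_const).continuousAt
  have h := this.preimage_mem_nhds (by rw [Prod.mk.eta]; exact hU.mem_nhds hq)
  exact h

lemma evmem_y {U : Set (ℝ × ℝ)} {q : ℝ × ℝ} (hU : IsOpen U) (hq : q ∈ U) :
    ∀ᶠ s in 𝓝 q.2, (q.1, s) ∈ U := by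
  have : ContinuousAt (fun s : ℝ => (q.1, s)) q.2 :=
    (continuous_const.prodMk continuous_id).continuousAt
  exact this.preimage_mem_nhds (by rw [Prod.mk.eta]; exact hU.mem_nhds hq)

lemma clairaut {f : ℝ × ℝ → ℝ} {U : Set (ℝ × ℝ)} (hU : IsOpen U)
    (hf : ContDiffOn ℝ (⊤ : ℕ∞) f U) {q : ℝ × ℝ} (hq : q ∈ U) :
    py (px f) q = px (py f) q := by
  have hf' : ContDiffOn ℝ (⊤ : ℕ∞) (fderiv ℝ f) U := by
    have := hf.fderiv_of_isOpen (m := (⊤ : ℕ∞)) hU (by exact_mod_cast le_top)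
    exact this
  have hdiff2 : DifferentiableAt ℝ (fderiv ℝ f) q := diffAt_of_contDiffOn hU hf' hq
  have hsymm : IsSymmSndFDerivAt ℝ f q :=
    (hf.contDiffAt (hU.mem_nhds hq)).isSymmSndFDerivAt (by rw [minSmoothness_of_isRCLikeNormedField]; exact WithTop.coe_le_coe.2 le_top)
  have h1 : py (px f) q = fderiv ℝ (fderiv ℝ f) q (0, 1) (1, 0) := by
    have he : (fun s => px f (q.1, s)) =ᶠ[𝓝 q.2] fun s => fderiv ℝ f (q.1, s) (1, 0) := by
      filter_upwards [evmem_y hU hq] with s hs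
      exact (hasDerivAt_fst' f (diffAt_of_contDiffOn hU hf hs)).deriv
    have hd : HasDerivAt (fun s => fderiv ℝ f (q.1, s) (1, 0))
        (fderiv ℝ (fderiv ℝ f) q (0, 1) (1, 0)) q.2 := by
      have := (hasDerivAt_snd' (fderiv ℝ f) hdiff2).clm_apply
        (hasDerivAt_const q.2 ((1 : ℝ), (0 : ℝ)))
      simpa using this
    calc py (px f) q = deriv (fun s => fderiv ℝ f (q.1, s) (1, 0)) q.2 := he.deriv_eq
      _ = fderiv ℝ (fderiv ℝ f) q (0, 1) (1, 0) := hd.deriv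
  have h2 : px (py f) q = fderiv ℝ (fderiv ℝ f) q (1, 0) (0, 1) := by
    have he : (fun t => py f (t, q.2)) =ᶠ[𝓝 q.1] fun t => fderiv ℝ f (t, q.2) (0, 1) := by
      filter_upwards [evmem_x hU hq] with t ht
      exact (hasDerivAt_snd' f (diffAt_of_contDiffOn hU hf ht)).deriv
    have hd : HasDerivAt (fun t => fderiv ℝ f (t, q.2) (0, 1))
        (fderiv ℝ (fderiv ℝ f) q (1, 0) (0, 1)) q.1 := by
      have := (hasDerivAt_fst' (fderiv ℝ f) hdiff2).clm_apply
        (hasDerivAt_const q.1 ((0 : ℝ), (1 : ℝ)))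
      simpa using this
    calc px (py f) q = deriv (fun t => fderiv ℝ f (t, q.2) (0, 1)) q.1 := he.deriv_eq
      _ = fderiv ℝ (fderiv ℝ f) q (1, 0) (0, 1) := hd.deriv
  rw [h1, h2, hsymm.eq]

lemma fderiv_vec (F : (Fin 5 → ℝ) → ℝ) (v w : Fin 5 → ℝ) :
    fderiv ℝ F v w = ∑ i, w i * pd i F v := by
  have hw : w = ∑ i : Fin 5, w i • (Pi.single i 1 : Fin 5 → ℝ) := by
    funext j
    simp [Finset.sum_apply, Pi.single_apply]
  conv_lhs => rw [hw]
  rw [map_sum]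
  simp [pd, smul_eq_mul]

lemma keyX {U : Set (ℝ × ℝ)} (hU : IsOpen U) {f : ℝ × ℝ → ℝ}
    (hfC : ContDiffOn ℝ (⊤ : ℕ∞) f U) {z : ℝ → ℝ → ℝ}
    (hjet : ∀ p : ℝ × ℝ, jet z p = ![p.1, p.2, f p, px f p, px (px f) p])
    {H : (Fin 5 → ℝ) → ℝ} (hH3 : ∀ p ∈ U, px (px (px f)) p = H (jet z p))
    {F : (Fin 5 → ℝ) → ℝ} {q : ℝ × ℝ} (hq : q ∈ U)
    (hF : DifferentiableAt ℝ F (jet z q)) :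
    HasDerivAt (fun t => F (jet z (t, q.2))) (Dop H F (jet z q)) q.1 := by
  have h1 : ContDiffOn ℝ (⊤ : ℕ∞) (px f) U := contDiffOn_px hU hfC
  have h2 : ContDiffOn ℝ (⊤ : ℕ∞) (px (px f)) U := contDiffOn_px hU h1
  have hc : HasDerivAt (fun t => jet z (t, q.2))
      ![1, 0, px f q, px (px f) q, px (px (px f)) q] q.1 := by
    rw [show (fun t => jet z (t, q.2)) =
        fun t => ![(t : ℝ), q.2, f (t, q.2), px f (t, q.2), px (px f) (t, q.2)] from
      funext fun t => hjet (t, q.2)]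
    apply hasDerivAt_pi.2
    intro i
    fin_cases i
    · simpa using hasDerivAt_id' q.1
    · simpa using hasDerivAt_const q.1 q.2
    · simpa using hasDerivAt_px (diffAt_of_contDiffOn hU hfC hq)
    · simpa using hasDerivAt_px (q := q) (diffAt_of_contDiffOn hU h1 hq)
    · simpa using hasDerivAt_px (q := q) (diffAt_of_contDiffOn hU h2 hq)
  have hcomp : HasDerivAt (fun t => F (jet z (t, q.2))) (fderiv ℝ F (jet z q) ![1, 0, px f q, px (px f) q, px (px (px f)) q]) q.1 :=
    hF.hasFDerivAt.comp_hasDerivAt q.1 hc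
  convert hcomp using 1
  rw [fderiv_vec, Fin.sum_univ_five]
  have e3 : jet z q 3 = px f q := by rw [hjet q]; simp
  have e4 : jet z q 4 = px (px f) q := by rw [hjet q]; simp
  have e5 : H (jet z q) = px (px (px f)) q := (hH3 q hq).symm
  simp only [Dop, e3, e4, e5, Matrix.cons_val_zero, Matrix.cons_val_one, Matrix.head_cons,
    Matrix.cons_val_two, Matrix.tail_cons, Matrix.cons_val_three, Matrix.cons_val_four]
  ring

lemma keyY {U : Set (ℝ × ℝ)} (hU : IsOpen U) {f : ℝ × ℝ → ℝ}
    (hfC : ContDiffOn ℝ (⊤ : ℕ∞) f U) {z : ℝ → ℝ → ℝ}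
    (hjet : ∀ p : ℝ × ℝ, jet z p = ![p.1, p.2, f p, px f p, px (px f) p])
    {G H : (Fin 5 → ℝ) → ℝ}
    (hG2 : ∀ p ∈ U, py f p = G (jet z p))
    {q : ℝ × ℝ}
    (hC1 : py (px f) q = Dop H G (jet z q))
    (hC2 : py (px (px f)) q = Dop H (Dop H G) (jet z q))
    {F : (Fin 5 → ℝ) → ℝ} (hq : q ∈ U)
    (hF : DifferentiableAt ℝ F (jet z q)) :
    HasDerivAt (fun s => F (jet z (q.1, s))) (Delta G H F (jet z q)) q.2 := by
  have h1 : ContDiffOn ℝ (⊤ : ℕ∞) (px f) U := contDiffOn_px hU hfC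
  have h2 : ContDiffOn ℝ (⊤ : ℕ∞) (px (px f)) U := contDiffOn_px hU h1
  have hc : HasDerivAt (fun s => jet z (q.1, s))
      ![0, 1, py f q, py (px f) q, py (px (px f)) q] q.2 := by
    rw [show (fun s => jet z (q.1, s)) =
        fun s => ![q.1, (s : ℝ), f (q.1, s), px f (q.1, s), px (px f) (q.1, s)] from
      funext fun s => hjet (q.1, s)]
    apply hasDerivAt_pi.2
    intro i
    fin_cases i
    · simpa using hasDerivAt_const q.2 q.1
    · simpa using hasDerivAt_id' q.2
    · simpa using hasDerivAt_py (diffAt_of_contDiffOn hU hfC hq)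
    · simpa using hasDerivAt_py (q := q) (diffAt_of_contDiffOn hU h1 hq)
    · simpa using hasDerivAt_py (q := q) (diffAt_of_contDiffOn hU h2 hq)
  have hcomp : HasDerivAt (fun s => F (jet z (q.1, s))) (fderiv ℝ F (jet z q) ![0, 1, py f q, py (px f) q, py (px (px f)) q]) q.2 :=
    hF.hasFDerivAt.comp_hasDerivAt q.2 hc
  convert hcomp using 1
  rw [fderiv_vec, Fin.sum_univ_five]
  have e3 : G (jet z q) = py f q := (hG2 q hq).symm
  simp only [Delta, e3, hC1.symm, hC2.symm, Matrix.cons_val_zero, Matrix.cons_val_one,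
    Matrix.head_cons, Matrix.cons_val_two, Matrix.tail_cons, Matrix.cons_val_three,
    Matrix.cons_val_four]
  ring

lemma contDiffOn_Dop {Ω : Set (Fin 5 → ℝ)} (hΩ : IsOpen Ω) {H F : (Fin 5 → ℝ) → ℝ}
    (hH : ContDiffOn ℝ (⊤ : ℕ∞) H Ω) (hF : ContDiffOn ℝ (⊤ : ℕ∞) F Ω) :
    ContDiffOn ℝ (⊤ : ℕ∞) (Dop H F) Ω := by
  have hpd : ∀ i : Fin 5, ContDiffOn ℝ (⊤ : ℕ∞) (pd i F) Ω := fun i => by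
    have h : ContDiffOn ℝ (⊤ : ℕ∞) (fderiv ℝ F) Ω := by
      have := hF.fderiv_of_isOpen (m := (⊤ : ℕ∞)) hΩ (by exact_mod_cast le_top)
      exact this
    exact h.clm_apply contDiffOn_const
  have hproj : ∀ i : Fin 5, ContDiffOn ℝ (⊤ : ℕ∞) (fun v : Fin 5 → ℝ => v i) Ω := fun i =>
    (ContinuousLinearMap.proj (R := ℝ) (φ := fun _ : Fin 5 => ℝ) i).contDiff.contDiffOn
  exact (((hpd 0).add ((hproj 3).mul (hpd 2))).add ((hproj 4).mul (hpd 3))).add (hH.mul (hpd 4))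
/-- The integrability expression `Δ H − D³ G` vanishes along the 2-jet of
any smooth solution of the PDE system. -/
theorem integrability_along_solution
    (Ω : Set (Fin 5 → ℝ)) (hΩ : IsOpen Ω) (G H : (Fin 5 → ℝ) → ℝ)
    (hG : ContDiffOn ℝ (⊤ : ℕ∞) G Ω) (hH : ContDiffOn ℝ (⊤ : ℕ∞) H Ω)
    (U : Set (ℝ × ℝ)) (hU : IsOpen U) (z : ℝ → ℝ → ℝ)
    (hz : IsSolution Ω G H U z) :
    ∀ q ∈ U, Delta G H H (jet z q) = Dop H (Dop H (Dop H G)) (jet z q) := by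
  obtain ⟨hfC, hmem, hGeq, hHeq⟩ := hz
  set f : ℝ × ℝ → ℝ := fun p => z p.1 p.2 with hf
  have hjet : ∀ p : ℝ × ℝ, jet z p = ![p.1, p.2, f p, px f p, px (px f) p] := fun p => rfl
  have hH3 : ∀ p ∈ U, px (px (px f)) p = H (jet z p) := fun p hp => hHeq p hp
  have hG2 : ∀ p ∈ U, py f p = G (jet z p) := fun p hp => hGeq p hp
  have hDG : ContDiffOn ℝ (⊤ : ℕ∞) (Dop H G) Ω := contDiffOn_Dop hΩ hH hG
  have hDDG : ContDiffOn ℝ (⊤ : ℕ∞) (Dop H (Dop H G)) Ω := contDiffOn_Dop hΩ hH hDG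
  have hC1 : ∀ p ∈ U, py (px f) p = Dop H G (jet z p) := by
    intro p hp
    rw [clairaut hU hfC hp]
    have he : (fun t => py f (t, p.2)) =ᶠ[𝓝 p.1] fun t => G (jet z (t, p.2)) := by
      filter_upwards [evmem_x hU hp] with t ht
      exact hG2 (t, p.2) ht
    have hd := keyX hU hfC hjet hH3 hp (diffAt_of_contDiffOn hΩ hG (hmem p hp))
    exact he.deriv_eq.trans hd.deriv
  have hC2 : ∀ p ∈ U, py (px (px f)) p = Dop H (Dop H G) (jet z p) := by
    intro p hp
    rw [clairaut hU (contDiffOn_px hU hfC) hp]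
    have he : (fun t => py (px f) (t, p.2)) =ᶠ[𝓝 p.1] fun t => Dop H G (jet z (t, p.2)) := by
      filter_upwards [evmem_x hU hp] with t ht
      exact hC1 (t, p.2) ht
    have hd := keyX hU hfC hjet hH3 hp (diffAt_of_contDiffOn hΩ hDG (hmem p hp))
    exact he.deriv_eq.trans hd.deriv
  intro q hq
  have hY := keyY hU hfC hjet hG2 (hC1 q hq) (hC2 q hq) hq
    (diffAt_of_contDiffOn hΩ hH (hmem q hq))
  have e1 : Delta G H H (jet z q) = py (px (px (px f))) q := by
    have he : (fun s => H (jet z (q.1, s))) =ᶠ[𝓝 q.2]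
        fun s => px (px (px f)) (q.1, s) := by
      filter_upwards [evmem_y hU hq] with s hs
      exact (hH3 (q.1, s) hs).symm
    rw [← hY.deriv]
    exact he.deriv_eq
  rw [e1, clairaut hU (contDiffOn_px hU (contDiffOn_px hU hfC)) hq]
  have he : (fun t => py (px (px f)) (t, q.2)) =ᶠ[𝓝 q.1]
      fun t => Dop H (Dop H G) (jet z (t, q.2)) := by
    filter_upwards [evmem_x hU hq] with t ht
    exact hC2 (t, q.2) ht
  have hd := keyX hU hfC hjet hH3 hq (diffAt_of_contDiffOn hΩ hDDG (hmem q hq))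
  exact he.deriv_eq.trans hd.deriv
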